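/- Let p' ≥ 3 be odd. For n ∈ ℕ let P_n(q) = Σ_{i=0}^{n} (−1)^i · q^{(p'/2)(i²+i) − i} · (1 − q^{n−i+1})(1 − q^{2i+1})(1 − q^{n+i+2}), a polynomial in ℤ[q] (all exponents (p'/2)(i²+i) − i are nonnegative integers since i²+i is even). Then for every m ∈ ℕ there exists N ∈ ℕ such that for all n ≥ N, the coefficient of q^m in P_n(q) equals the coefficient of q^m in the power series Σ_{i=0}^{∞} (−1)^i · q^{(p'/2)(i²+i) − i} · (1 − q^{2i+1}) ∈ ℤ[[q]] (this series is well defined since only finitely many terms contribute to each fixed power of q). That is, the sequence P_n(q) converges coefficient-wise to Σ_{i≥0} (−1)^i q^{(p'/2)(i²+i)−i}(1 − q^{2i+1}). -/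

import Mathlib

open Finset

noncomputable section

/-- The polynomial
`P_n(q) = Σ_{i=0}^{n} (-1)^i q^{(p'/2)(i²+i) - i} (1-q^{n-i+1})(1-q^{2i+1})(1-q^{n+i+2})`;
the exponents `(p'/2)(i²+i) - i = p'(i²+i)/2 - i` are nonnegative integers since
`i²+i` is even (and `p' ≥ 3`). -/
def P (p' n : ℕ) : Polynomial ℤ :=
  ∑ i ∈ Finset.range (n + 1), ((-1 : ℤ) ^ i) •
    (Polynomial.X ^ (p' * (i ^ 2 + i) / 2 - i) *
      (1 - Polynomial.X ^ (n - i + 1)) * (1 - Polynomial.X ^ (2 * i + 1)) *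
      (1 - Polynomial.X ^ (n + i + 2)) : Polynomial ℤ)

/-- The power series `Σ_{i=0}^{∞} (-1)^i q^{(p'/2)(i²+i) - i} (1-q^{2i+1}) ∈ ℤ[[q]]`:
since the exponent `p'(i²+i)/2 - i` is at least `i`, only the terms with `i ≤ m`
can contribute to the coefficient of `q^m`, so the series is well defined, with
`m`-th coefficient `Σ_{i=0}^{m} (-1)^i ([p'(i²+i)/2 - i = m] - [p'(i²+i)/2 + i + 1 = m])`. -/
def S (p' : ℕ) : PowerSeries ℤ :=
  PowerSeries.mk (fun m => ∑ i ∈ Finset.range (m + 1), (-1 : ℤ) ^ i *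
    ((if p' * (i ^ 2 + i) / 2 - i = m then 1 else 0)
      - (if p' * (i ^ 2 + i) / 2 + i + 1 = m then 1 else 0)))

/-- for odd `p' ≥ 3`, the polynomials `P_n(q)` converge coefficient-wise,
as `n → ∞`, to the power series `Σ_{i≥0} (-1)^i q^{(p'/2)(i²+i)-i}(1 - q^{2i+1})`. -/
theorem stmt19 (p' : ℕ) (hp' : 3 ≤ p') (hodd : Odd p') :
    ∀ m : ℕ, ∃ N : ℕ, ∀ n : ℕ, N ≤ n →
      (P p' n).coeff m = PowerSeries.coeff m (S p') := by
  intro m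
  refine ⟨m, fun n hn => ?_⟩
  have hdvd : ∀ i : ℕ, 2 ∣ i ^ 2 + i := by
    intro i
    have h : i ^ 2 + i = i * (i + 1) := by ring
    rw [h]
    exact Even.two_dvd (Nat.even_mul_succ_self i)
  have he3 : ∀ i : ℕ, 3 * i ≤ p' * (i ^ 2 + i) / 2 := by
    intro i
    rw [Nat.mul_div_assoc _ (hdvd i)]
    have h2 : 2 * i ≤ i ^ 2 + i := by nlinarith
    have h1 : i ≤ (i ^ 2 + i) / 2 := by omega
    calc 3 * i ≤ 3 * ((i ^ 2 + i) / 2) := by omega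
    _ ≤ p' * ((i ^ 2 + i) / 2) := Nat.mul_le_mul_right _ hp'
  rw [P, Polynomial.finset_sum_coeff, S, PowerSeries.coeff_mk]
  have key : ∀ i ∈ Finset.range (n + 1),
      (((-1 : ℤ) ^ i) • (Polynomial.X ^ (p' * (i ^ 2 + i) / 2 - i) *
        (1 - Polynomial.X ^ (n - i + 1)) * (1 - Polynomial.X ^ (2 * i + 1)) *
        (1 - Polynomial.X ^ (n + i + 2)) : Polynomial ℤ)).coeff m
      = (-1 : ℤ) ^ i * ((if p' * (i ^ 2 + i) / 2 - i = m then 1 else 0)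
          - (if p' * (i ^ 2 + i) / 2 + i + 1 = m then 1 else 0)) := by
    intro i hi
    rw [Finset.mem_range] at hi
    have hie := he3 i
    set e := p' * (i ^ 2 + i) / 2 - i with hedef
    have h1 : 2 * i ≤ e := by omega
    have hexp : (Polynomial.X ^ e *
        (1 - Polynomial.X ^ (n - i + 1)) * (1 - Polynomial.X ^ (2 * i + 1)) *
        (1 - Polynomial.X ^ (n + i + 2)) : Polynomial ℤ)
      = Polynomial.X ^ e - Polynomial.X ^ (e + (n - i + 1))
        - Polynomial.X ^ (e + (2 * i + 1)) - Polynomial.X ^ (e + (n + i + 2))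
        + Polynomial.X ^ (e + (n - i + 1) + (2 * i + 1))
        + Polynomial.X ^ (e + (n - i + 1) + (n + i + 2))
        + Polynomial.X ^ (e + (2 * i + 1) + (n + i + 2))
        - Polynomial.X ^ (e + (n - i + 1) + (2 * i + 1) + (n + i + 2)) := by
      simp only [pow_add]; ring
    rw [Polynomial.coeff_smul, hexp]
    simp only [Polynomial.coeff_sub, Polynomial.coeff_add, Polynomial.coeff_X_pow]
    have f1 : ¬ (m = e + (n - i + 1)) := by omega
    have f2 : ¬ (m = e + (n + i + 2)) := by omega
    have f3 : ¬ (m = e + (n - i + 1) + (2 * i + 1)) := by omega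
    have f4 : ¬ (m = e + (n - i + 1) + (n + i + 2)) := by omega
    have f5 : ¬ (m = e + (2 * i + 1) + (n + i + 2)) := by omega
    have f6 : ¬ (m = e + (n - i + 1) + (2 * i + 1) + (n + i + 2)) := by omega
    have g1 : e + (2 * i + 1) = p' * (i ^ 2 + i) / 2 + i + 1 := by omega
    have g2 : (m = e) ↔ (e = m) := eq_comm
    have g3 : (m = e + (2 * i + 1)) ↔ (p' * (i ^ 2 + i) / 2 + i + 1 = m) := by
      rw [g1]; exact eq_comm
    rw [if_neg f1, if_neg f2, if_neg f3, if_neg f4, if_neg f5, if_neg f6]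
    rw [if_congr g2 rfl rfl, if_congr g3 rfl rfl]
    rw [smul_eq_mul]
    ring
  rw [Finset.sum_congr rfl key]
  refine (Finset.sum_subset (Finset.range_subset_range.mpr (by omega)) ?_).symm
  intro i hi hi'
  rw [Finset.mem_range] at hi hi'
  have hie := he3 i
  have c1 : ¬ (p' * (i ^ 2 + i) / 2 - i = m) := by omega
  have c2 : ¬ (p' * (i ^ 2 + i) / 2 + i + 1 = m) := by omega
  rw [if_neg c1, if_neg c2]
  ring
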